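/- Let G be a group with finite symmetric generating set T, and let H = G ∗ F_n be the free product with the free group of rank n > |T|/2, generated by S = T ∪ U where U is the standard symmetric generating set of F_n. Then for every nontrivial g ∈ G: Av_H(g) = (|T|·Av_G(g) + 2n(|g|+2))/(|T| + 2n) > |g|, hence κ_H(g) < 0. Moreover the inclusion G → H is an isometry for the word metrics. -/

import Mathlib

open Filter Topology

section WL
variable {G : Type*} [Group G]

/-- Word length of `g` with respect to a generating set `S`. -/
noncomputable def wl (S : Set G) (g : G) : ℕ :=
  sInf {n | ∃ l : List G, (∀ x ∈ l, x ∈ S) ∧ l.length = n ∧ l.prod = g}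

/-- Average word length of conjugates of `g` by elements of `S`. -/
noncomputable def Av (S : Finset G) (g : G) : ℝ :=
  (∑ a ∈ S, (wl (S : Set G) (a⁻¹ * g * a) : ℝ)) / S.card

/-- Medium-scale Ricci curvature `κ(g) = (|g| - Av(g))/|g|`. -/
noncomputable def curv (S : Finset G) (g : G) : ℝ :=
  ((wl (S : Set G) g : ℝ) - Av S g) / (wl (S : Set G) g)

end WL

namespace Stmt18

open Monoid

universe u

section WLaux

variable {H : Type*} [Group H]

lemma wl_le {S : Set H} {g : H} {l : List H} (hl : ∀ x ∈ l, x ∈ S) (hp : l.prod = g) :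
    wl S g ≤ l.length :=
  Nat.sInf_le ⟨l, hl, rfl, hp⟩

lemma exists_wl_word {S : Set H} {g : H} (hx : g ∈ Submonoid.closure S) :
    ∃ l : List H, (∀ x ∈ l, x ∈ S) ∧ l.length = wl S g ∧ l.prod = g := by
  have hne : {k | ∃ l : List H, (∀ x ∈ l, x ∈ S) ∧ l.length = k ∧ l.prod = g}.Nonempty := by
    obtain ⟨l, h1, h2⟩ := Submonoid.exists_list_of_mem_closure hx
    exact ⟨l.length, l, h1, rfl, h2⟩
  exact Nat.sInf_mem hne

lemma wl_mul_le {S : Set H} {g h : H} (hg : g ∈ Submonoid.closure S)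
    (hh : h ∈ Submonoid.closure S) : wl S (g * h) ≤ wl S g + wl S h := by
  obtain ⟨l1, hl1, hL1, hp1⟩ := exists_wl_word hg
  obtain ⟨l2, hl2, hL2, hp2⟩ := exists_wl_word hh
  have := wl_le (S := S) (g := g * h) (l := l1 ++ l2)
    (fun x hx => by rcases List.mem_append.1 hx with h' | h'; exacts [hl1 x h', hl2 x h'])
    (by rw [List.prod_append, hp1, hp2])
  simpa [hL1, hL2] using this

lemma one_le_wl {S : Set H} {g : H} (hx : g ∈ Submonoid.closure S) (hg : g ≠ 1) :
    1 ≤ wl S g := by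
  rcases Nat.eq_zero_or_pos (wl S g) with h0 | h
  · obtain ⟨l, _, hlen, hprod⟩ := exists_wl_word hx
    rw [h0] at hlen
    rw [List.length_eq_zero_iff] at hlen
    subst hlen
    simp at hprod
    exact absurd hprod.symm hg
  · exact h

lemma mem_mclosure_of_symm {S : Set H} (hsym : ∀ a ∈ S, a⁻¹ ∈ S)
    (hgen : Subgroup.closure S = ⊤) (x : H) : x ∈ Submonoid.closure S := by
  have hx : x ∈ (Subgroup.closure S).toSubmonoid := by
    rw [hgen]; trivial
  rw [Subgroup.closure_toSubmonoid] at hx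
  have : S ∪ S⁻¹ = S := by
    apply Set.union_eq_self_of_subset_right
    intro a ha
    have := hsym a⁻¹ (by simpa using ha)
    simpa using this
  rwa [this] at hx

end WLaux

/-- Auxiliary two-point family of groups for the free product `G ∗ Fₙ`. -/
def Mix (G : Type u) (n : ℕ) : Bool → Type u
  | false => G
  | true => ULift (FreeGroup (Fin n))

instance (G : Type u) [Group G] (n : ℕ) : ∀ b, Group (Mix G n b)
  | false => inferInstanceAs (Group G)
  | true => inferInstanceAs (Group (ULift (FreeGroup (Fin n))))

/-- The canonical map `G ∗ Fₙ →* CoprodI (Mix G n)`. -/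
noncomputable def theta (G : Type u) [Group G] (n : ℕ) :
    Coprod G (FreeGroup (Fin n)) →* Monoid.CoprodI (Mix G n) :=
  Coprod.lift (CoprodI.of (M := Mix G n) (i := false))
    ((CoprodI.of (M := Mix G n) (i := true)).comp
      ((MulEquiv.ulift (α := FreeGroup (Fin n))).symm.toMonoidHom))

lemma theta_inl {G : Type u} [Group G] {n : ℕ} (x : G) :
    theta G n (Coprod.inl x) = CoprodI.of (M := Mix G n) (i := false) x :=
  Coprod.lift_apply_inl _ _ x

lemma theta_inr {G : Type u} [Group G] {n : ℕ} (y : FreeGroup (Fin n)) :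
    theta G n (Coprod.inr y) = CoprodI.of (M := Mix G n) (i := true) (ULift.up y) := by
  simp [theta]; rfl

lemma key_ne {G : Type u} [Group G] {n : ℕ} {g a b : G} (hg : g ≠ 1)
    {y y' : FreeGroup (Fin n)} (hy : y ≠ 1) (hy' : y' ≠ 1) :
    (Coprod.inr y)⁻¹ * Coprod.inl g * Coprod.inr y ≠ Coprod.inl a ∧
    (Coprod.inr y)⁻¹ * Coprod.inl g * Coprod.inr y ≠
      Coprod.inl a * Coprod.inr y' * Coprod.inl b := by
  classical
  have prodInj : Function.Injective (CoprodI.Word.prod (M := Mix G n)) := fun w1 w2 h =>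
    Equiv.injective (@CoprodI.Word.equiv Bool (Mix G n) _ instDecidableEqBool
      (fun b => Classical.decEq _)).symm h
  have hyu : ∀ z : FreeGroup (Fin n), z ≠ 1 → (ULift.up z : Mix G n true) ≠ 1 := by
    intro z hz h
    exact hz (congrArg ULift.down h)
  have hchain3 : ([⟨true, ULift.up y⁻¹⟩, ⟨false, g⟩, ⟨true, ULift.up y⟩] :
      List (Σ b, Mix G n b)).IsChain (fun l l' => l.fst ≠ l'.fst) := by
    simp [List.isChain_cons_cons]
  set wz : CoprodI.Word (Mix G n) :=
    ⟨[⟨true, ULift.up y⁻¹⟩, ⟨false, g⟩, ⟨true, ULift.up y⟩], by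
      intro l hl
      simp only [List.mem_cons, List.mem_singleton] at hl
      rcases hl with rfl | rfl | rfl | h
      · exact hyu _ (inv_ne_one.2 hy)
      · exact hg
      · exact hyu _ hy
      · exact absurd h List.not_mem_nil, hchain3⟩ with hwz
  have hprodz : wz.prod = theta G n ((Coprod.inr y)⁻¹ * Coprod.inl g * Coprod.inr y) := by
    simp only [map_mul, map_inv, theta_inl, theta_inr, CoprodI.Word.prod, hwz]
    simp [mul_assoc]
    exact (map_inv (CoprodI.of (M := Mix G n) (i := true)) (ULift.up y)).symm
  constructor
  · intro h
    by_cases ha : a = 1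
    · subst ha
      have : wz.prod = (CoprodI.Word.empty (M := Mix G n)).prod := by
        rw [hprodz, h, CoprodI.Word.prod_empty, map_one, map_one]
      have := congrArg CoprodI.Word.toList (prodInj this)
      simp [hwz, CoprodI.Word.empty] at this
    · set wa : CoprodI.Word (Mix G n) := ⟨[⟨false, a⟩], by intro l hl; rcases List.mem_singleton.1 hl with rfl; exact ha, by simp⟩ with hwa
      have hprpa : wa.prod = theta G n (Coprod.inl a) := by
        simp [hwa, CoprodI.Word.prod, theta_inl]
      have : wz.prod = wa.prod := by rw [hprodz, hprpa, h]
      have := congrArg CoprodI.Word.toList (prodInj this)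
      simp [hwz, hwa] at this
  · intro h
    by_cases ha : a = 1 <;> by_cases hb : b = 1
    · subst ha; subst hb
      set w1 : CoprodI.Word (Mix G n) := ⟨[⟨true, ULift.up y'⟩], by intro l hl; rcases List.mem_singleton.1 hl with rfl; exact hyu _ hy', by simp⟩
        with hw1
      have hp1 : w1.prod = theta G n (Coprod.inl 1 * Coprod.inr y' * Coprod.inl 1) := by
        simp [hw1, CoprodI.Word.prod, theta_inr]
      have : wz.prod = w1.prod := by rw [hprodz, hp1, h]
      have := congrArg CoprodI.Word.toList (prodInj this)
      simp [hwz, hw1] at this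
    · subst ha
      set w1 : CoprodI.Word (Mix G n) := ⟨[⟨true, ULift.up y'⟩, ⟨false, b⟩], by
        intro l hl
        rcases List.mem_cons.1 hl with rfl | hl
        · exact hyu _ hy'
        · rcases List.mem_singleton.1 hl with rfl; exact hb, by simp⟩ with hw1
      have hp1 : w1.prod = theta G n (Coprod.inl 1 * Coprod.inr y' * Coprod.inl b) := by
        simp [hw1, CoprodI.Word.prod, theta_inr, theta_inl]
      have : wz.prod = w1.prod := by rw [hprodz, hp1, h]
      have := congrArg CoprodI.Word.toList (prodInj this)
      simp [hwz, hw1] at this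
    · subst hb
      set w1 : CoprodI.Word (Mix G n) := ⟨[⟨false, a⟩, ⟨true, ULift.up y'⟩], by
        intro l hl
        rcases List.mem_cons.1 hl with rfl | hl
        · exact ha
        · rcases List.mem_singleton.1 hl with rfl; exact hyu _ hy', by simp⟩ with hw1
      have hp1 : w1.prod = theta G n (Coprod.inl a * Coprod.inr y' * Coprod.inl 1) := by
        simp [hw1, CoprodI.Word.prod, theta_inr, theta_inl]
      have : wz.prod = w1.prod := by rw [hprodz, hp1, h]
      have := congrArg CoprodI.Word.toList (prodInj this)
      simp [hwz, hw1] at this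
    · set w1 : CoprodI.Word (Mix G n) := ⟨[⟨false, a⟩, ⟨true, ULift.up y'⟩, ⟨false, b⟩], by
        intro l hl
        simp only [List.mem_cons, List.mem_singleton] at hl
        rcases hl with rfl | rfl | rfl | hl
        · exact ha
        · exact hyu _ hy'
        · exact hb
        · exact absurd hl List.not_mem_nil, by simp [List.isChain_cons_cons]⟩ with hw1
      have hp1 : w1.prod = theta G n (Coprod.inl a * Coprod.inr y' * Coprod.inl b) := by
        simp [hw1, CoprodI.Word.prod, theta_inr, theta_inl, mul_assoc]
      have : wz.prod = w1.prod := by rw [hprodz, hp1, h]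
      have := congrArg CoprodI.Word.toList (prodInj this)
      simp [hwz, hw1] at this
      exact Bool.noConfusion (congrArg Sigma.fst this.1)

theorem stmt18 {G : Type*} [Group G] (T : Finset G)
    (hgen : Subgroup.closure (T : Set G) = ⊤)
    (hsym : ∀ a ∈ T, a⁻¹ ∈ T) (hid : (1 : G) ∉ T) (hne : T.Nonempty)
    (n : ℕ) (hn : T.card < 2 * n)
    (S : Finset (Coprod G (FreeGroup (Fin n))))
    (hS : (S : Set (Coprod G (FreeGroup (Fin n)))) =
        (fun g => Coprod.inl g) '' (T : Set G) ∪
          (fun i => Coprod.inr (FreeGroup.of i)) '' (Set.univ : Set (Fin n)) ∪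
          (fun i => (Coprod.inr (FreeGroup.of i))⁻¹) '' (Set.univ : Set (Fin n))) :
    (∀ g : G, g ≠ 1 →
        Av S (Coprod.inl g) =
            ((T.card : ℝ) * Av T g + 2 * n * ((wl (T : Set G) g : ℝ) + 2)) /
              ((T.card : ℝ) + 2 * n) ∧
          (wl (T : Set G) g : ℝ) < Av S (Coprod.inl g) ∧
          curv S (Coprod.inl g) < 0) ∧
      (∀ g : G,
        wl ((S : Finset (Coprod G (FreeGroup (Fin n)))) : Set (Coprod G (FreeGroup (Fin n))))
            (Coprod.inl g) = wl (T : Set G) g) := by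
  classical
  -- exponent-sum homomorphism on the free group
  set ε : FreeGroup (Fin n) →* Multiplicative ℤ :=
    FreeGroup.lift (fun _ => Multiplicative.ofAdd (1 : ℤ)) with hε
  have hεof : ∀ i : Fin n, ε (FreeGroup.of i) = Multiplicative.ofAdd (1 : ℤ) :=
    fun i => FreeGroup.lift_apply_of
  have hof1 : ∀ i : Fin n, FreeGroup.of i ≠ (1 : FreeGroup (Fin n)) := by
    intro i h
    have h2 := congrArg (fun w => Multiplicative.toAdd (ε w)) h
    simp only [hεof, map_one, toAdd_ofAdd, toAdd_one] at h2
    omega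
  have hof_ne_inv : ∀ i j : Fin n, FreeGroup.of i ≠ (FreeGroup.of j)⁻¹ := by
    intro i j h
    have h2 := congrArg (fun w => Multiplicative.toAdd (ε w)) h
    simp only [hεof, map_inv, toAdd_ofAdd, toAdd_inv] at h2
    omega
  -- membership facts for S
  have hA : ∀ t ∈ T, (Coprod.inl t : Coprod G (FreeGroup (Fin n))) ∈ (S : Set _) := by
    intro t ht
    rw [hS]
    exact Or.inl (Or.inl ⟨t, ht, rfl⟩)
  have hB : ∀ i : Fin n, (Coprod.inr (FreeGroup.of i) : Coprod G (FreeGroup (Fin n)))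
      ∈ (S : Set _) := by
    intro i
    rw [hS]
    exact Or.inl (Or.inr ⟨i, trivial, rfl⟩)
  have hC : ∀ i : Fin n, ((Coprod.inr (FreeGroup.of i))⁻¹ : Coprod G (FreeGroup (Fin n)))
      ∈ (S : Set _) := by
    intro i
    rw [hS]
    exact Or.inr ⟨i, trivial, rfl⟩
  have hScases : ∀ s ∈ (S : Set (Coprod G (FreeGroup (Fin n)))),
      (∃ t ∈ T, s = Coprod.inl t) ∨
        (∃ y : FreeGroup (Fin n), y ≠ 1 ∧ s = Coprod.inr y) := by
    intro s hs
    rw [hS] at hs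
    rcases hs with (⟨t, ht, rfl⟩ | ⟨i, -, rfl⟩) | ⟨i, -, rfl⟩
    · exact Or.inl ⟨t, ht, rfl⟩
    · exact Or.inr ⟨FreeGroup.of i, hof1 i, rfl⟩
    · exact Or.inr ⟨(FreeGroup.of i)⁻¹, inv_ne_one.2 (hof1 i), (map_inv _ _).symm⟩
  have hSsym : ∀ s ∈ (S : Set (Coprod G (FreeGroup (Fin n)))), s⁻¹ ∈ (S : Set _) := by
    intro s hs
    rw [hS] at hs
    rcases hs with (⟨t, ht, rfl⟩ | ⟨i, -, rfl⟩) | ⟨i, -, rfl⟩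
    · rw [← map_inv]
      exact hA _ (hsym t ht)
    · exact hC i
    · rw [inv_inv]
      exact hB i
  -- generation
  have hGmcl : ∀ x : G, x ∈ Submonoid.closure (T : Set G) :=
    mem_mclosure_of_symm hsym hgen
  have hStop : Subgroup.closure (S : Set (Coprod G (FreeGroup (Fin n)))) = ⊤ := by
    rw [Subgroup.eq_top_iff']
    intro x
    refine Coprod.induction_on x ?_ ?_ ?_
    · intro m
      have hm : m ∈ Subgroup.closure (T : Set G) := by rw [hgen]; trivial
      have hmap : (Subgroup.closure (T : Set G)).map (Coprod.inl : G →* _) ≤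
          Subgroup.closure (S : Set (Coprod G (FreeGroup (Fin n)))) := by
        rw [MonoidHom.map_closure]
        apply Subgroup.closure_mono
        rintro x ⟨t, ht, rfl⟩
        exact hA t ht
      exact hmap ⟨m, hm, rfl⟩
    · intro y
      induction y using FreeGroup.induction_on with
      | C1 => rw [map_one]; exact one_mem _
      | of i => exact Subgroup.subset_closure (hB i)
      | inv_of i _ =>
        rw [map_inv]
        exact Subgroup.subset_closure (hC i)
      | mul y z hy hz => rw [map_mul]; exact mul_mem hy hz
    · intro x y hx hy
      exact mul_mem hx hy
  have hHmcl : ∀ x : Coprod G (FreeGroup (Fin n)), x ∈ Submonoid.closure (S : Set _) :=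
    mem_mclosure_of_symm hSsym hStop
  -- structure of products of letters of S
  have struct : ∀ l : List (Coprod G (FreeGroup (Fin n))), (∀ x ∈ l, x ∈ (S : Set _)) →
      ∃ m : List G, (∀ x ∈ m, x ∈ (T : Set G)) ∧ m.prod = Coprod.fst l.prod ∧
        ((l.prod = Coprod.inl m.prod ∧ m.length ≤ l.length) ∨
          (∃ (a : G) (y' : FreeGroup (Fin n)) (b : G), y' ≠ 1 ∧
            l.prod = Coprod.inl a * Coprod.inr y' * Coprod.inl b ∧
            m.length + 1 ≤ l.length) ∨
          m.length + 2 ≤ l.length) := by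
    intro l
    induction l with
    | nil =>
      intro _
      exact ⟨[], by simp, by simp, Or.inl ⟨by simp, le_refl _⟩⟩
    | cons s l ih =>
      intro hl
      obtain ⟨m, hmT, hmprod, hcase⟩ := ih (fun x hx => hl x (List.mem_cons_of_mem _ hx))
      rcases hScases s (hl s List.mem_cons_self) with ⟨t, ht, rfl⟩ | ⟨y', hy', rfl⟩
      · refine ⟨t :: m, ?_, ?_, ?_⟩
        · intro x hx
          rcases List.mem_cons.1 hx with rfl | hx
          · exact ht
          · exact hmT x hx
        · simp [hmprod]
        · rcases hcase with ⟨heq, hlen⟩ | ⟨a, y', b, hy', heq, hlen⟩ | hlen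
          · refine Or.inl ⟨?_, by simpa using Nat.succ_le_succ hlen⟩
            rw [List.prod_cons, heq, List.prod_cons, map_mul]
          · refine Or.inr (Or.inl ⟨t * a, y', b, hy', ?_, by simpa using Nat.succ_le_succ hlen⟩)
            rw [List.prod_cons, heq, map_mul]
            group
          · exact Or.inr (Or.inr (by simpa using Nat.succ_le_succ hlen))
      · refine ⟨m, hmT, by simp [hmprod], ?_⟩
        rcases hcase with ⟨heq, hlen⟩ | ⟨a, y'', b, hy'', heq, hlen⟩ | hlen
        · refine Or.inr (Or.inl ⟨1, y', m.prod, hy', ?_, ?_⟩)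
          · rw [List.prod_cons, heq, map_one, one_mul]
          · simp only [List.length_cons]
            omega
        · refine Or.inr (Or.inr ?_)
          simp only [List.length_cons]
          omega
        · refine Or.inr (Or.inr ?_)
          simp only [List.length_cons]
          omega
  -- the isometry statement
  have isom : ∀ g : G, wl (S : Set (Coprod G (FreeGroup (Fin n)))) (Coprod.inl g)
      = wl (T : Set G) g := by
    intro g
    apply le_antisymm
    · obtain ⟨l, hl, hlen, hprod⟩ := exists_wl_word (hGmcl g)
      have h1 : ∀ x ∈ l.map (fun t => (Coprod.inl t : Coprod G (FreeGroup (Fin n)))),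
          x ∈ (S : Set _) := by
        intro x hx
        obtain ⟨t, ht, rfl⟩ := List.mem_map.1 hx
        exact hA t (hl t ht)
      have h2 : (l.map (fun t => (Coprod.inl t : Coprod G (FreeGroup (Fin n))))).prod
          = Coprod.inl g := by
        rw [← hprod]
        exact (map_list_prod (Coprod.inl : G →* Coprod G (FreeGroup (Fin n))) l).symm
      have := wl_le h1 h2
      simpa [hlen] using this
    · obtain ⟨l, hl, hlen, hprod⟩ := exists_wl_word (hHmcl (Coprod.inl g))
      obtain ⟨m, hmT, hmprod, hcase⟩ := struct l hl
      have hmg : m.prod = g := by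
        rw [hmprod, hprod]; simp
      have h1 : wl (T : Set G) g ≤ m.length := wl_le hmT hmg
      have h2 : m.length ≤ l.length := by
        rcases hcase with ⟨_, h⟩ | ⟨_, _, _, _, _, h⟩ | h <;> omega
      omega
  -- word length of conjugates by free letters
  have conj : ∀ g : G, g ≠ 1 → ∀ y : FreeGroup (Fin n), y ≠ 1 →
      (Coprod.inr y : Coprod G (FreeGroup (Fin n))) ∈ (S : Set _) →
      ((Coprod.inr y)⁻¹ : Coprod G (FreeGroup (Fin n))) ∈ (S : Set _) →
      wl (S : Set (Coprod G (FreeGroup (Fin n))))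
        ((Coprod.inr y)⁻¹ * Coprod.inl g * Coprod.inr y) = wl (T : Set G) g + 2 := by
    intro g hg y hy hyS hyS'
    apply le_antisymm
    · obtain ⟨l, hl, hlen, hprod⟩ := exists_wl_word (hGmcl g)
      set w : List (Coprod G (FreeGroup (Fin n))) :=
        (Coprod.inr y)⁻¹ :: (l.map (fun t => (Coprod.inl t : Coprod G (FreeGroup (Fin n))))
          ++ [Coprod.inr y]) with hw
      have h1 : ∀ x ∈ w, x ∈ (S : Set _) := by
        intro x hx
        rcases List.mem_cons.1 hx with rfl | hx
        · exact hyS'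
        · rcases List.mem_append.1 hx with hx | hx
          · obtain ⟨t, ht, rfl⟩ := List.mem_map.1 hx
            exact hA t (hl t ht)
          · rcases List.mem_singleton.1 hx with rfl
            exact hyS
      have h2 : w.prod = (Coprod.inr y)⁻¹ * Coprod.inl g * Coprod.inr y := by
        rw [hw, List.prod_cons, List.prod_append, List.prod_singleton,
          ← (map_list_prod (Coprod.inl : G →* Coprod G (FreeGroup (Fin n))) l), hprod,
          mul_assoc]
      have := wl_le h1 h2
      simp [hw, hlen, Nat.add_comm, Nat.add_left_comm] at this
      omega
    · obtain ⟨l, hl, hlen, hprod⟩ :=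
        exists_wl_word (hHmcl ((Coprod.inr y)⁻¹ * Coprod.inl g * Coprod.inr y))
      obtain ⟨m, hmT, hmprod, hcase⟩ := struct l hl
      have hmg : m.prod = g := by
        rw [hmprod, hprod]; simp
      rcases hcase with ⟨heq, _⟩ | ⟨a, y', b, hy', heq, _⟩ | h
      · rw [hprod] at heq
        exact absurd heq (key_ne (b := (1 : G)) (y' := y) hg hy hy).1
      · rw [hprod] at heq
        exact absurd heq (key_ne hg hy hy').2
      · have h1 : wl (T : Set G) g ≤ m.length := wl_le hmT hmg
        omega
  -- Finset decomposition of S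
  set A : Finset (Coprod G (FreeGroup (Fin n))) :=
    T.image (fun t => (Coprod.inl t : Coprod G (FreeGroup (Fin n)))) with hA'
  set B : Finset (Coprod G (FreeGroup (Fin n))) :=
    Finset.univ.image (fun i : Fin n => (Coprod.inr (FreeGroup.of i) :
      Coprod G (FreeGroup (Fin n)))) with hB'
  set C : Finset (Coprod G (FreeGroup (Fin n))) :=
    Finset.univ.image (fun i : Fin n => ((Coprod.inr (FreeGroup.of i))⁻¹ :
      Coprod G (FreeGroup (Fin n)))) with hC'
  have hSeq : S = A ∪ B ∪ C := by
    apply Finset.coe_injective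
    rw [hS, hA', hB', hC']
    simp only [Finset.coe_union, Finset.coe_image, Finset.coe_univ, Set.image_univ]
  have hinjB : Function.Injective (fun i : Fin n => (Coprod.inr (FreeGroup.of i) :
      Coprod G (FreeGroup (Fin n)))) :=
    fun i j h => FreeGroup.of_injective (Coprod.inr_injective h)
  have hinjC : Function.Injective (fun i : Fin n => ((Coprod.inr (FreeGroup.of i))⁻¹ :
      Coprod G (FreeGroup (Fin n)))) :=
    fun i j h => hinjB (inv_injective h)
  have dAB : Disjoint A B := by
    rw [Finset.disjoint_left]
    rintro x hxA hxB
    rw [hA', Finset.mem_image] at hxA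
    rw [hB', Finset.mem_image] at hxB
    obtain ⟨t, ht, rfl⟩ := hxA
    obtain ⟨i, -, heq⟩ := hxB
    have := congrArg Coprod.fst heq
    simp only [Coprod.fst_apply_inl, Coprod.fst_apply_inr] at this
    subst this
    exact hid ht
  have dAC : Disjoint A C := by
    rw [Finset.disjoint_left]
    rintro x hxA hxC
    rw [hA', Finset.mem_image] at hxA
    rw [hC', Finset.mem_image] at hxC
    obtain ⟨t, ht, rfl⟩ := hxA
    obtain ⟨i, -, heq⟩ := hxC
    have := congrArg Coprod.fst heq
    simp only [map_inv, Coprod.fst_apply_inl, Coprod.fst_apply_inr, inv_one] at this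
    subst this
    exact hid ht
  have dBC : Disjoint B C := by
    rw [Finset.disjoint_left]
    rintro x hxB hxC
    rw [hB', Finset.mem_image] at hxB
    rw [hC', Finset.mem_image] at hxC
    obtain ⟨i, -, rfl⟩ := hxB
    obtain ⟨j, -, heq⟩ := hxC
    rw [← map_inv] at heq
    have := Coprod.inr_injective heq
    exact hof_ne_inv i j this.symm
  have hcardA : A.card = T.card := Finset.card_image_of_injective _ Coprod.inl_injective
  have hcardB : B.card = n := by
    rw [hB', Finset.card_image_of_injective _ hinjB, Finset.card_univ, Fintype.card_fin]
  have hcardC : C.card = n := by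
    rw [hC', Finset.card_image_of_injective _ hinjC, Finset.card_univ, Fintype.card_fin]
  have hScard : S.card = T.card + n + n := by
    rw [hSeq, Finset.card_union_of_disjoint (Finset.disjoint_union_left.2 ⟨dAC, dBC⟩),
      Finset.card_union_of_disjoint dAB, hcardA, hcardB, hcardC]
  -- now the main statement
  refine ⟨?_, isom⟩
  intro g hg
  set L : ℝ := (wl (T : Set G) g : ℝ) with hL
  have hcpos : (0 : ℝ) < T.card := by
    exact_mod_cast Finset.card_pos.2 hne
  have hnpos : (0 : ℕ) < n := by omega
  -- the sum over S
  have hsumA : ∑ a ∈ A, (wl (S : Set (Coprod G (FreeGroup (Fin n))))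
      (a⁻¹ * Coprod.inl g * a) : ℝ) = ∑ t ∈ T, (wl (T : Set G) (t⁻¹ * g * t) : ℝ) := by
    rw [hA', Finset.sum_image (fun x _ y _ h => Coprod.inl_injective h)]
    refine Finset.sum_congr rfl ?_
    intro t _
    congr 1
    rw [← map_inv, ← map_mul, ← map_mul, isom]
  have hsumB : ∑ a ∈ B, (wl (S : Set (Coprod G (FreeGroup (Fin n))))
      (a⁻¹ * Coprod.inl g * a) : ℝ) = n * (L + 2) := by
    rw [hB', Finset.sum_image (fun x _ y _ h => hinjB h)]
    have : ∀ i : Fin n, (wl (S : Set (Coprod G (FreeGroup (Fin n))))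
        ((Coprod.inr (FreeGroup.of i))⁻¹ * Coprod.inl g * Coprod.inr (FreeGroup.of i)) : ℝ)
        = L + 2 := by
      intro i
      rw [conj g hg (FreeGroup.of i) (hof1 i) (hB i) (hC i)]
      push_cast [hL]
      ring
    rw [Finset.sum_congr rfl (fun i _ => this i), Finset.sum_const, Finset.card_univ,
      Fintype.card_fin, nsmul_eq_mul]
  have hsumC : ∑ a ∈ C, (wl (S : Set (Coprod G (FreeGroup (Fin n))))
      (a⁻¹ * Coprod.inl g * a) : ℝ) = n * (L + 2) := by
    rw [hC', Finset.sum_image (fun x _ y _ h => hinjC h)]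
    have : ∀ i : Fin n, (wl (S : Set (Coprod G (FreeGroup (Fin n))))
        (((Coprod.inr (FreeGroup.of i))⁻¹)⁻¹ * Coprod.inl g * (Coprod.inr (FreeGroup.of i))⁻¹) : ℝ)
        = L + 2 := by
      intro i
      have hy : ((FreeGroup.of i)⁻¹ : FreeGroup (Fin n)) ≠ 1 := inv_ne_one.2 (hof1 i)
      have hmem : (Coprod.inr ((FreeGroup.of i)⁻¹) : Coprod G (FreeGroup (Fin n)))
          ∈ (S : Set _) := by
        simp only [map_inv]
        exact hC i
      have hmem' : ((Coprod.inr ((FreeGroup.of i)⁻¹))⁻¹ : Coprod G (FreeGroup (Fin n)))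
          ∈ (S : Set _) := by
        simp only [map_inv, inv_inv]
        exact hB i
      rw [show ((Coprod.inr (FreeGroup.of i))⁻¹ : Coprod G (FreeGroup (Fin n)))
        = Coprod.inr ((FreeGroup.of i)⁻¹) from (map_inv _ _).symm]
      rw [conj g hg ((FreeGroup.of i)⁻¹) hy hmem hmem']
      push_cast [hL]
      ring
    rw [Finset.sum_congr rfl (fun i _ => this i), Finset.sum_const, Finset.card_univ,
      Fintype.card_fin, nsmul_eq_mul]
  have hsum : ∑ a ∈ S, (wl (S : Set (Coprod G (FreeGroup (Fin n))))
      (a⁻¹ * Coprod.inl g * a) : ℝ)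
      = (∑ t ∈ T, (wl (T : Set G) (t⁻¹ * g * t) : ℝ)) + 2 * n * (L + 2) := by
    rw [show (∑ a ∈ S, (wl (S : Set (Coprod G (FreeGroup (Fin n))))
        (a⁻¹ * Coprod.inl g * a) : ℝ))
        = ∑ a ∈ A ∪ B ∪ C, (wl (S : Set (Coprod G (FreeGroup (Fin n))))
        (a⁻¹ * Coprod.inl g * a) : ℝ) from by rw [← hSeq]]
    rw [Finset.sum_union (Finset.disjoint_union_left.2 ⟨dAC, dBC⟩),
      Finset.sum_union dAB, hsumA, hsumB, hsumC]
    ring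
  have hsumT : ∑ t ∈ T, (wl (T : Set G) (t⁻¹ * g * t) : ℝ) = (T.card : ℝ) * Av T g := by
    rw [Av]
    field_simp
  have hAvS : Av S (Coprod.inl g) =
      ((T.card : ℝ) * Av T g + 2 * n * (L + 2)) / ((T.card : ℝ) + 2 * n) := by
    rw [Av, hsum, hsumT, hScard]
    push_cast
    ring_nf
  -- lower bound for Av T g
  have hterm : ∀ t ∈ T, (L : ℝ) - 2 ≤ (wl (T : Set G) (t⁻¹ * g * t) : ℝ) := by
    intro t ht
    have h1 : wl (T : Set G) g ≤ wl (T : Set G) (t⁻¹ * g * t) + 2 := by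
      have e1 : g = t * ((t⁻¹ * g * t) * t⁻¹) := by group
      have h2 := wl_mul_le (S := (T : Set G)) (hGmcl t)
        (hGmcl ((t⁻¹ * g * t) * t⁻¹))
      have h3 := wl_mul_le (S := (T : Set G)) (hGmcl (t⁻¹ * g * t)) (hGmcl t⁻¹)
      have h4 : wl (T : Set G) t ≤ 1 := wl_le (l := [t]) (by simpa using ht) (by simp)
      have h5 : wl (T : Set G) t⁻¹ ≤ 1 :=
        wl_le (l := [t⁻¹]) (by simpa using hsym t ht) (by simp)
      calc wl (T : Set G) g = wl (T : Set G) (t * ((t⁻¹ * g * t) * t⁻¹)) := by rw [← e1]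
        _ ≤ wl (T : Set G) t + wl (T : Set G) ((t⁻¹ * g * t) * t⁻¹) := h2
        _ ≤ wl (T : Set G) t + (wl (T : Set G) (t⁻¹ * g * t) + wl (T : Set G) t⁻¹) :=
            Nat.add_le_add_left h3 _
        _ ≤ 1 + (wl (T : Set G) (t⁻¹ * g * t) + 1) := by omega
        _ = wl (T : Set G) (t⁻¹ * g * t) + 2 := by omega
    rw [hL]
    have := (Nat.cast_le (α := ℝ)).2 h1
    push_cast at this
    linarith
  have hAvT : (L : ℝ) - 2 ≤ Av T g := by
    rw [Av, le_div_iff₀ hcpos]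
    calc (L - 2) * (T.card : ℝ) = ∑ _t ∈ T, (L - 2) := by
          rw [Finset.sum_const, nsmul_eq_mul]; ring
      _ ≤ ∑ t ∈ T, (wl (T : Set G) (t⁻¹ * g * t) : ℝ) := Finset.sum_le_sum hterm
  have hL1 : (1 : ℝ) ≤ L := by
    rw [hL]
    exact_mod_cast one_le_wl (hGmcl g) hg
  have hcn : (T.card : ℝ) < 2 * n := by exact_mod_cast hn
  have hlt : L < Av S (Coprod.inl g) := by
    rw [hAvS]
    rw [lt_div_iff₀ (by positivity)]
    nlinarith [mul_le_mul_of_nonneg_left hAvT (le_of_lt hcpos)]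
  refine ⟨hAvS, hlt, ?_⟩
  rw [curv, isom g]
  apply div_neg_of_neg_of_pos
  · rw [← hL] at *
    linarith
  · rw [← hL]
    linarith

end Stmt18
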